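/- Let J : R^n → R be convex differentiable with L-Lipschitz gradient, X compact convex, ε > 0, ϱ = 2/(L+2ε), and x_{k+1} = Π_X(x_k - ϱ∇J(x_k)) with x_0 ∈ X. Then J(x_k) converges to min_{x ∈ X} J(x) as k → ∞. -/

import Mathlib

open scoped InnerProductSpace RealInnerProductSpace
open Set Filter

section helpers
variable {n : ℕ}


lemma line_hasDerivAt (J : EuclideanSpace ℝ (Fin n) → ℝ) (J' : EuclideanSpace ℝ (Fin n) → EuclideanSpace ℝ (Fin n))
    (hgrad : ∀ x, HasGradientAt J (J' x) x)
    (p d : EuclideanSpace ℝ (Fin n)) (t : ℝ) :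
    HasDerivAt (fun t : ℝ => J (p + t • d)) (⟪J' (p + t • d), d⟫_ℝ) t := by
  have hl : HasDerivAt (fun t : ℝ => p + t • d) d t := by
    simpa using ((hasDerivAt_id t).smul_const d).const_add p
  have := (hgrad (p + t • d)).hasFDerivAt.comp_hasDerivAt t hl
  simpa [InnerProductSpace.toDual_apply_apply, Function.comp_def] using this

lemma grad_ineq (J : EuclideanSpace ℝ (Fin n) → ℝ) (J' : EuclideanSpace ℝ (Fin n) → EuclideanSpace ℝ (Fin n))
    (hconv : ConvexOn ℝ Set.univ J) (hgrad : ∀ x, HasGradientAt J (J' x) x)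
    (p q : EuclideanSpace ℝ (Fin n)) :
    ⟪J' p, q - p⟫_ℝ ≤ J q - J p := by
  have hφ : ConvexOn ℝ Set.univ fun t : ℝ => J (p + t • (q - p)) := by
    have h := hconv.comp_affineMap (AffineMap.lineMap p q : ℝ →ᵃ[ℝ] _)
    rw [Set.preimage_univ] at h
    have e : (fun t : ℝ => J (p + t • (q - p))) = J ∘ ⇑(AffineMap.lineMap p q : ℝ →ᵃ[ℝ] _) := by
      funext t
      simp [Function.comp, AffineMap.lineMap_apply]
      abel_nf
    rw [e]; exact h
  have hderiv : HasDerivAt (fun t : ℝ => J (p + t • (q - p))) (⟪J' p, q - p⟫_ℝ) 0 := by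
    have := line_hasDerivAt J J' hgrad p (q - p) 0
    simpa using this
  have := hφ.le_slope_of_hasDerivAt (mem_univ (0:ℝ)) (mem_univ (1:ℝ)) one_pos hderiv
  simpa [slope_def_field] using this

lemma proj_char {X : Set (EuclideanSpace ℝ (Fin n))} (hXconv : Convex ℝ X)
    {u v : EuclideanSpace ℝ (Fin n)} (hv : v ∈ X)
    (hmin : ∀ z ∈ X, ‖v - u‖ ≤ ‖z - u‖) : ∀ z ∈ X, ⟪u - v, z - v⟫_ℝ ≤ 0 := by
  haveI : Nonempty X := ⟨⟨v, hv⟩⟩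
  have hbdd : BddBelow (Set.range fun w : X => ‖u - (w : EuclideanSpace ℝ (Fin n))‖) := by
    refine ⟨0, ?_⟩
    rintro r ⟨w, rfl⟩
    exact norm_nonneg _
  have heq : ‖u - v‖ = ⨅ w : X, ‖u - (w : EuclideanSpace ℝ (Fin n))‖ := by
    apply le_antisymm
    · apply le_ciInf
      intro w
      have h := hmin w w.2
      rwa [norm_sub_rev v u, norm_sub_rev (w : EuclideanSpace ℝ (Fin n)) u] at h
    · exact ciInf_le hbdd ⟨v, hv⟩
  exact (norm_eq_iInf_iff_real_inner_le_zero hXconv hv).mp heq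


lemma descent (J : EuclideanSpace ℝ (Fin n) → ℝ) (J' : EuclideanSpace ℝ (Fin n) → EuclideanSpace ℝ (Fin n))
    (hgrad : ∀ x, HasGradientAt J (J' x) x)
    {L : ℝ} (hL : 0 ≤ L) (hLip : ∀ x y, ‖J' x - J' y‖ ≤ L * ‖x - y‖)
    (hJ'cont : Continuous J') (p d : EuclideanSpace ℝ (Fin n)) :
    J (p + d) ≤ J p + ⟪J' p, d⟫_ℝ + L / 2 * ‖d‖ ^ 2 := by
  have hcont : Continuous fun t : ℝ => (⟪J' (p + t • d), d⟫_ℝ) := by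
    apply Continuous.inner
    · exact hJ'cont.comp (by continuity)
    · exact continuous_const
  have hftc : ∫ t in (0:ℝ)..1, ⟪J' (p + t • d), d⟫_ℝ = J (p + d) - J p := by
    have h := intervalIntegral.integral_eq_sub_of_hasDerivAt
      (f := fun t : ℝ => J (p + t • d)) (f' := fun t : ℝ => ⟪J' (p + t • d), d⟫_ℝ)
      (fun t _ => line_hasDerivAt J J' hgrad p d t)
      (hcont.intervalIntegrable 0 1)
    simpa using h
  have hmono : ∫ t in (0:ℝ)..1, ⟪J' (p + t • d), d⟫_ℝ
      ≤ ∫ t in (0:ℝ)..1, (⟪J' p, d⟫_ℝ + (L * ‖d‖ ^ 2) * t) := by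
    apply intervalIntegral.integral_mono_on (by norm_num) (hcont.intervalIntegrable 0 1)
      ((by fun_prop : Continuous fun t : ℝ => ⟪J' p, d⟫_ℝ + (L * ‖d‖ ^ 2) * t).intervalIntegrable 0 1)
    intro t ht
    have h1 : ⟪J' (p + t • d), d⟫_ℝ - ⟪J' p, d⟫_ℝ = ⟪J' (p + t • d) - J' p, d⟫_ℝ := by
      rw [inner_sub_left]
    have h2 : ⟪J' (p + t • d) - J' p, d⟫_ℝ ≤ ‖J' (p + t • d) - J' p‖ * ‖d‖ :=
      real_inner_le_norm _ _
    have h3 : ‖J' (p + t • d) - J' p‖ ≤ L * (t * ‖d‖) := by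
      have h4 := hLip (p + t • d) p
      simpa [norm_smul, abs_of_nonneg ht.1] using h4
    nlinarith [norm_nonneg d, ht.1, norm_nonneg (J' (p + t • d) - J' p)]
  have hint : ∫ t in (0:ℝ)..1, (⟪J' p, d⟫_ℝ + (L * ‖d‖ ^ 2) * t)
      = ⟪J' p, d⟫_ℝ + L * ‖d‖ ^ 2 / 2 := by
    rw [intervalIntegral.integral_add intervalIntegrable_const
      ((by fun_prop : Continuous fun t : ℝ => (L * ‖d‖ ^ 2) * t).intervalIntegrable 0 1)]
    rw [intervalIntegral.integral_const_mul, integral_id]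
    simp [intervalIntegral.integral_const]; ring
  have := hftc ▸ (hint ▸ hmono)
  linarith

end helpers

set_option maxHeartbeats 1000000 in
/-- Convergence of projected gradient descent: `J(x_k)` converges to the minimum of `J`
over the compact convex set `X`. -/
theorem stmt_4 {n : ℕ} (J : EuclideanSpace ℝ (Fin n) → ℝ)
    (J' : EuclideanSpace ℝ (Fin n) → EuclideanSpace ℝ (Fin n))
    (hconv : ConvexOn ℝ Set.univ J)
    (hgrad : ∀ x, HasGradientAt J (J' x) x)
    (L ε ϱ : ℝ) (hL : 0 ≤ L) (hε : 0 < ε) (hϱ : ϱ = 2 / (L + 2 * ε))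
    (hLip : ∀ x y, ‖J' x - J' y‖ ≤ L * ‖x - y‖)
    (X : Set (EuclideanSpace ℝ (Fin n)))
    (hXne : X.Nonempty) (hXcomp : IsCompact X) (hXconv : Convex ℝ X)
    (x : ℕ → EuclideanSpace ℝ (Fin n)) (hx0 : x 0 ∈ X)
    (hmem : ∀ k, x (k + 1) ∈ X)
    (hproj : ∀ k, ∀ z ∈ X, ‖x (k + 1) - (x k - ϱ • J' (x k))‖ ≤ ‖z - (x k - ϱ • J' (x k))‖) :
    Filter.Tendsto (fun k => J (x k)) Filter.atTop (nhds (sInf (J '' X))) := by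
  have hden : 0 < L + 2 * ε := by linarith
  have hϱpos : 0 < ϱ := by rw [hϱ]; positivity
  have hϱinv : 1 / ϱ = L / 2 + ε := by rw [hϱ]; field_simp
  have hJ'cont : Continuous J' := by
    have lipJ : LipschitzWith (Real.toNNReal L) J' := by
      apply LipschitzWith.of_dist_le_mul
      intro a b
      rw [dist_eq_norm, dist_eq_norm]
      simpa [Real.coe_toNNReal L hL] using hLip a b
    exact lipJ.continuous
  have hJcont : Continuous J := by
    rw [continuous_iff_continuousAt]
    exact fun z => (hgrad z).hasFDerivAt.continuousAt
  have hxX : ∀ k, x k ∈ X := fun k => Nat.casesOn k hx0 hmem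
  obtain ⟨xs, hxsX, hxsmin⟩ := hXcomp.exists_isMinOn hXne hJcont.continuousOn
  have hxsle : ∀ z ∈ X, J xs ≤ J z := fun z hz => hxsmin hz
  have hsinf : sInf (J '' X) = J xs := by
    apply IsLeast.csInf_eq
    exact ⟨⟨xs, hxsX, rfl⟩, by rintro _ ⟨z, hz, rfl⟩; exact hxsle z hz⟩
  obtain ⟨R, hR⟩ := hXcomp.isBounded.exists_norm_le
  set B1 : ℝ := L * R + ‖J' 0‖ with hB1def
  have hB1 : ∀ z ∈ X, ‖J' z‖ ≤ B1 := by
    intro z hz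
    have h0 : ‖J' z‖ ≤ ‖J' z - J' 0‖ + ‖J' 0‖ := by
      calc ‖J' z‖ = ‖J' z - J' 0 + J' 0‖ := by rw [sub_add_cancel]
        _ ≤ ‖J' z - J' 0‖ + ‖J' 0‖ := norm_add_le _ _
    have h1 : ‖J' z - J' 0‖ ≤ L * ‖z‖ := by simpa using hLip z 0
    have h2 : L * ‖z‖ ≤ L * R := by
      apply mul_le_mul_of_nonneg_left (hR z hz) hL
    rw [hB1def]; linarith
  set C : ℝ := B1 + (1 / ϱ) * (2 * R) with hCdef
  have hchar : ∀ k, ∀ z ∈ X, ⟪(x k - ϱ • J' (x k)) - x (k + 1), z - x (k + 1)⟫_ℝ ≤ 0 :=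
    fun k => proj_char hXconv (hmem k) (fun z hz => hproj k z hz)
  -- sufficient decrease
  have hdec : ∀ k, J (x (k + 1)) ≤ J (x k) - ε * ‖x (k + 1) - x k‖ ^ 2 := by
    intro k
    set a := x k with ha
    set b := x (k + 1) with hb
    set v := J' a with hv
    have h1 := hchar k a (hxX k)
    have hre : (a - ϱ • v) - b = (a - b) - ϱ • v := by abel
    rw [hre, inner_sub_left, real_inner_smul_left] at h1
    have e2 : ⟪a - b, a - b⟫_ℝ = ‖b - a‖ ^ 2 := by
      rw [show a - b = -(b - a) by abel, inner_neg_neg, real_inner_self_eq_norm_sq]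
    have e3 : ⟪v, a - b⟫_ℝ = -⟪v, b - a⟫_ℝ := by
      rw [show a - b = -(b - a) by abel, inner_neg_right]
    rw [e2, e3] at h1
    -- h1 : ‖b - a‖^2 - ϱ * (-⟪v, b - a⟫) ≤ 0, i.e. ‖b-a‖² + ϱ⟪v,b-a⟫ ≤ 0
    have hdesc := descent J J' hgrad hL hLip hJ'cont a (b - a)
    rw [add_sub_cancel] at hdesc
    have hIle : ⟪v, b - a⟫_ℝ ≤ (-(‖b - a‖ ^ 2)) / ϱ := by
      rw [le_div_iff₀ hϱpos]
      nlinarith [h1]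
    have heq : (-(‖b - a‖ ^ 2)) / ϱ = -((L / 2 + ε) * ‖b - a‖ ^ 2) := by
      rw [← hϱinv]; field_simp
    rw [heq] at hIle
    nlinarith [hdesc, hIle]
  -- suboptimality bound
  have hsub : ∀ k, J (x k) - J xs ≤ C * ‖x (k + 1) - x k‖ := by
    intro k
    set a := x k with ha
    set b := x (k + 1) with hb
    set v := J' a with hv
    have h2R : ‖xs - b‖ ≤ 2 * R := by
      calc ‖xs - b‖ ≤ ‖xs‖ + ‖b‖ := norm_sub_le _ _
        _ ≤ R + R := add_le_add (hR _ hxsX) (hR _ (hmem k))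
        _ = 2 * R := by ring
    have hgi := grad_ineq J J' hconv hgrad a xs
    have hch := hchar k xs hxsX
    have hre : (a - ϱ • v) - b = (a - b) - ϱ • v := by abel
    rw [hre, inner_sub_left, real_inner_smul_left] at hch
    -- hch : ⟪a - b, xs - b⟫ - ϱ * ⟪v, xs - b⟫ ≤ 0
    have h5 : ⟪a - b, xs - b⟫_ℝ ≤ ϱ * ⟪v, xs - b⟫_ℝ := by linarith
    -- split ⟪v, a - xs⟫ = ⟪v, a - b⟫ + ⟪v, b - xs⟫
    have hsplit : ⟪v, a - xs⟫_ℝ = ⟪v, a - b⟫_ℝ + ⟪v, b - xs⟫_ℝ := by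
      rw [inner_sub_right, inner_sub_right, inner_sub_right]; ring
    have hneg : ⟪v, a - xs⟫_ℝ = -⟪v, xs - a⟫_ℝ := by
      rw [show a - xs = -(xs - a) by abel, inner_neg_right]
    have hbxs : ⟪v, b - xs⟫_ℝ = -⟪v, xs - b⟫_ℝ := by
      rw [show b - xs = -(xs - b) by abel, inner_neg_right]
    have hba : ⟪b - a, xs - b⟫_ℝ = -⟪a - b, xs - b⟫_ℝ := by
      rw [show b - a = -(a - b) by abel, inner_neg_left]
    -- bound ⟪v, b - xs⟫ ≤ (1/ϱ) * ⟪b - a, xs - b⟫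
    have h6 : ⟪v, b - xs⟫_ℝ ≤ (1 / ϱ) * ⟪b - a, xs - b⟫_ℝ := by
      rw [hbxs, hba]
      rw [div_mul_eq_mul_div, le_div_iff₀ hϱpos]
      nlinarith [h5]
    have h7 : ⟪b - a, xs - b⟫_ℝ ≤ ‖b - a‖ * (2 * R) := by
      calc ⟪b - a, xs - b⟫_ℝ ≤ ‖b - a‖ * ‖xs - b‖ := real_inner_le_norm _ _
        _ ≤ ‖b - a‖ * (2 * R) := by
            apply mul_le_mul_of_nonneg_left h2R (norm_nonneg _)
    have h8 : ⟪v, a - b⟫_ℝ ≤ B1 * ‖b - a‖ := by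
      calc ⟪v, a - b⟫_ℝ ≤ ‖v‖ * ‖a - b‖ := real_inner_le_norm _ _
        _ = ‖v‖ * ‖b - a‖ := by rw [norm_sub_rev]
        _ ≤ B1 * ‖b - a‖ := by
            apply mul_le_mul_of_nonneg_right (hB1 a (hxX k)) (norm_nonneg _)
    have h9 : (1 / ϱ) * ⟪b - a, xs - b⟫_ℝ ≤ (1 / ϱ) * (‖b - a‖ * (2 * R)) := by
      apply mul_le_mul_of_nonneg_left h7 (by positivity)
    have hfin : J a - J xs ≤ B1 * ‖b - a‖ + (1 / ϱ) * (‖b - a‖ * (2 * R)) := by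
      have h10 : J a - J xs ≤ ⟪v, a - xs⟫_ℝ := by
        rw [hneg]; linarith [hgi]
      rw [hsplit] at h10
      calc J a - J xs ≤ ⟪v, a - b⟫_ℝ + ⟪v, b - xs⟫_ℝ := h10
        _ ≤ B1 * ‖b - a‖ + 1 / ϱ * ⟪b - a, xs - b⟫_ℝ := add_le_add h8 h6
        _ ≤ B1 * ‖b - a‖ + 1 / ϱ * (‖b - a‖ * (2 * R)) := add_le_add_right h9 _
    have hCexp : C * ‖b - a‖ = B1 * ‖b - a‖ + (1 / ϱ) * (‖b - a‖ * (2 * R)) := by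
      rw [hCdef]; ring
    exact hfin.trans hCexp.ge
  -- convergence of the values
  have hmonoJ : ∀ k, J (x (k + 1)) ≤ J (x k) := by
    intro k
    have h := hdec k
    nlinarith [mul_nonneg hε.le (sq_nonneg ‖x (k + 1) - x k‖)]
  have hanti : Antitone fun k => J (x k) := antitone_nat_of_succ_le hmonoJ
  have hbdd : BddBelow (Set.range fun k => J (x k)) := by
    refine ⟨J xs, ?_⟩
    rintro r ⟨k, rfl⟩
    exact hxsle _ (hxX k)
  have hlim : Filter.Tendsto (fun k => J (x k)) Filter.atTop (nhds (⨅ k, J (x k))) :=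
    tendsto_atTop_ciInf hanti hbdd
  have hlim' : Filter.Tendsto (fun k => J (x (k + 1))) Filter.atTop (nhds (⨅ k, J (x k))) :=
    hlim.comp (Filter.tendsto_add_atTop_nat 1)
  have hdiff : Filter.Tendsto (fun k => J (x k) - J (x (k + 1))) Filter.atTop (nhds 0) := by
    have := hlim.sub hlim'
    simpa using this
  have hd2 : Filter.Tendsto (fun k => ‖x (k + 1) - x k‖ ^ 2) Filter.atTop (nhds 0) := by
    apply squeeze_zero (fun k => sq_nonneg _) (g := fun k => (J (x k) - J (x (k + 1))) / ε)
    · intro k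
      rw [le_div_iff₀ hε]
      nlinarith [hdec k]
    · simpa using hdiff.div_const ε
  have hdn : Filter.Tendsto (fun k => ‖x (k + 1) - x k‖) Filter.atTop (nhds 0) := by
    have h := hd2.sqrt
    rw [Real.sqrt_zero] at h
    have heq : (fun k => Real.sqrt (‖x (k + 1) - x k‖ ^ 2)) = fun k => ‖x (k + 1) - x k‖ := by
      funext k
      exact Real.sqrt_sq (norm_nonneg _)
    rwa [heq] at h
  rw [hsinf]
  apply tendsto_of_tendsto_of_tendsto_of_le_of_le (g := fun _ => J xs)
    (h := fun k => J xs + C * ‖x (k + 1) - x k‖)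
  · exact tendsto_const_nhds
  · have h := (tendsto_const_nhds :
        Filter.Tendsto (fun _ : ℕ => J xs) Filter.atTop (nhds (J xs))).add (hdn.const_mul C)
    simpa using h
  · exact fun k => hxsle _ (hxX k)
  · intro k
    dsimp only
    linarith [hsub k]
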